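/- Under the hypotheses of the tilting theorem (f has identical conditional law in every group), if additionally μ(A = a) = μ(A = a') for two groups a, a', then μ_w(A = a) = μ_w(A = a') for every w ≥ 0 with ∫ f^w dμ finite and positive. -/

import Mathlib

open MeasureTheory ProbabilityTheory

/-- The `f^w`-tilted (guided) measure `μ_w` with `dμ_w = f^w dμ / ∫ f^w dμ`. -/
noncomputable def tilt {X : Type} [MeasurableSpace X]
    (μ : Measure X) (f : X → ℝ) (w : ℝ) : Measure X :=
  (∫⁻ x, ENNReal.ofReal (f x ^ w) ∂μ)⁻¹ • μ.withDensity (fun x => ENNReal.ofReal (f x ^ w))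

lemma key_setLintegral {X : Type} [MeasurableSpace X] (μ : Measure X) [IsProbabilityMeasure μ]
    {S : Set X} (hS : MeasurableSet S) (hS0 : μ S ≠ 0)
    (f : X → ℝ) (hf : Measurable f) (w : ℝ) :
    ∫⁻ x in S, ENNReal.ofReal (f x ^ w) ∂μ
      = μ S * ∫⁻ y, ENNReal.ofReal (y ^ w) ∂((ProbabilityTheory.cond μ S).map f) := by
  have hmeas : Measurable fun y : ℝ => ENNReal.ofReal (y ^ w) :=
    by fun_prop
  rw [lintegral_map hmeas hf]
  unfold ProbabilityTheory.cond
  rw [lintegral_smul_measure, smul_eq_mul, ← mul_assoc, ENNReal.mul_inv_cancel hS0 (measure_ne_top μ S),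
    one_mul]

/-- A fair (balanced) base distribution remains fair under guidance of any scale when the
guidance function satisfies Strong Demographic Parity: if `f` has identical conditional
law in every group and `μ(A=a) = μ(A=a')`, then `μ_w(A=a) = μ_w(A=a')` for every
`w ≥ 0` with `∫ f^w dμ` finite and positive. -/
theorem tilt_preserves_fairness
    {X : Type} [MeasurableSpace X] (μ : Measure X) [IsProbabilityMeasure μ]
    {𝒜 : Type} [Fintype 𝒜] [MeasurableSpace 𝒜] [MeasurableSingletonClass 𝒜]
    (A : X → 𝒜) (hA : Measurable A) (hpos : ∀ a, μ (A ⁻¹' {a}) ≠ 0)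
    (f : X → ℝ) (hf : Measurable f) (hfpos : ∀ x, 0 < f x)
    (hcond : ∀ a a' : 𝒜,
      (ProbabilityTheory.cond μ (A ⁻¹' {a})).map f
        = (ProbabilityTheory.cond μ (A ⁻¹' {a'})).map f)
    (a a' : 𝒜) (hbal : μ (A ⁻¹' {a}) = μ (A ⁻¹' {a'})) :
    ∀ w : ℝ, 0 ≤ w → Integrable (fun x => f x ^ w) μ → (0 < ∫ x, f x ^ w ∂μ) →
      tilt μ f w (A ⁻¹' {a}) = tilt μ f w (A ⁻¹' {a'}) := by
  intro w _ _ _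
  have hSa : MeasurableSet (A ⁻¹' {a}) := hA (measurableSet_singleton a)
  have hSa' : MeasurableSet (A ⁻¹' {a'}) := hA (measurableSet_singleton a')
  have hg : Measurable fun x => ENNReal.ofReal (f x ^ w) :=
    by fun_prop
  simp only [tilt, Measure.smul_apply, smul_eq_mul, withDensity_apply _ hSa,
    withDensity_apply _ hSa']
  rw [key_setLintegral μ hSa (hpos a) f hf w, key_setLintegral μ hSa' (hpos a') f hf w,
    hbal, hcond a a']
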